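/- The graph G(ℤ,{2,3}) admits no (1,2,2,2,2)-packing coloring: there is no f:ℤ→{1,…,5} with f⁻¹(1) independent and f⁻¹(i) a 2-packing for i∈{2,3,4,5}. -/

import Mathlib

def distG (t : ℤ) : SimpleGraph ℤ :=
  SimpleGraph.fromRel (fun i j => |i - j| = 2 ∨ |i - j| = t)

lemma adjG_iff (u v : ℤ) : (distG 3).Adj u v ↔
    u ≠ v ∧ (u - v = 2 ∨ u - v = -2 ∨ u - v = 3 ∨ u - v = -3) := by
  simp only [distG, SimpleGraph.fromRel_adj,
    abs_eq (show (0:ℤ) ≤ 2 by norm_num), abs_eq (show (0:ℤ) ≤ 3 by norm_num)]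
  constructor
  · rintro ⟨h, h2⟩
    exact ⟨h, by omega⟩
  · rintro ⟨h, h2⟩
    exact ⟨h, by omega⟩

lemma distG_le_two {u v : ℤ} (h1 : u ≠ v) (h2 : -6 ≤ u - v) (h3 : u - v ≤ 6) :
    (distG 3).dist u v ≤ 2 := by
  by_cases h : (distG 3).Adj u v
  · exact le_trans (SimpleGraph.dist_le (.cons h .nil)) (by simp)
  · have hno : ¬(u - v = 2 ∨ u - v = -2 ∨ u - v = 3 ∨ u - v = -3) :=
      fun hx => h ((adjG_iff u v).mpr ⟨h1, hx⟩)
    obtain ⟨w, hw1, hw2⟩ : ∃ w : ℤ,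
        (u - w = 2 ∨ u - w = -2 ∨ u - w = 3 ∨ u - w = -3) ∧
        (w - v = 2 ∨ w - v = -2 ∨ w - v = 3 ∨ w - v = -3) := by
      rcases show u - v = 1 ∨ u - v = -1 ∨ u - v = 4 ∨ u - v = -4 ∨ u - v = 5 ∨
          u - v = -5 ∨ u - v = 6 ∨ u - v = -6 by omega with h|h|h|h|h|h|h|h
      · exact ⟨u - 3, by omega, by omega⟩
      · exact ⟨u + 3, by omega, by omega⟩
      · exact ⟨u - 2, by omega, by omega⟩
      · exact ⟨u + 2, by omega, by omega⟩
      · exact ⟨u - 2, by omega, by omega⟩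
      · exact ⟨u + 2, by omega, by omega⟩
      · exact ⟨u - 3, by omega, by omega⟩
      · exact ⟨u + 3, by omega, by omega⟩
    have ha : (distG 3).Adj u w := (adjG_iff u w).mpr ⟨by omega, hw1⟩
    have hb : (distG 3).Adj w v := (adjG_iff w v).mpr ⟨by omega, hw2⟩
    exact le_trans (SimpleGraph.dist_le (.cons ha (.cons hb .nil))) (by simp)

theorem stmt7 :
    ¬ ∃ f : ℤ → Fin 5, ∀ u v : ℤ, u ≠ v → f u = f v →
      ((f u : ℕ) = 0 → ¬ (distG 3).Adj u v) ∧ (1 ≤ (f u : ℕ) → 2 < (distG 3).dist u v) := by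
  rintro ⟨f, hf⟩
  have hA : ∀ u v : ℤ, u ≠ v → f u = f v → (f u : ℕ) = 0 →
      u - v ≠ 2 ∧ u - v ≠ -2 ∧ u - v ≠ 3 ∧ u - v ≠ -3 := by
    intro u v h1 h2 h0
    have h3 := (hf u v h1 h2).1 h0
    rw [adjG_iff] at h3
    push_neg at h3
    have h4 := h3 h1
    omega
  have hB : ∀ u v : ℤ, u ≠ v → f u = f v → 1 ≤ (f u : ℕ) →
      u - v ≤ -7 ∨ 7 ≤ u - v := by
    intro u v h1 h2 hc
    by_contra hcon
    have h5 := (hf u v h1 h2).2 hc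
    have h6 := distG_le_two h1 (by omega) (by omega)
    omega
  classical
  set S : Finset ℤ := Finset.Icc 0 34 with hS
  have hcard : S.card = 35 := by rw [hS, Int.card_Icc]; rfl
  have hfib := Finset.card_eq_sum_card_fiberwise
      (f := f) (s := S) (t := Finset.univ) (fun x _ => Finset.mem_univ _)
  have heavy : ∀ c : Fin 5, 1 ≤ (c : ℕ) →
      (S.filter (fun x => f x = c)).card ≤ 5 := by
    intro c hc
    have h1 := Finset.card_eq_sum_card_fiberwise
      (f := fun x : ℤ => (x / 7).toNat) (s := S.filter (fun x => f x = c))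
      (t := Finset.range 5)
      (by
        intro x hx
        rw [Finset.mem_coe, Finset.mem_filter, hS, Finset.mem_Icc] at hx
        show (x / 7).toNat ∈ Finset.range 5
        rw [Finset.mem_range]
        omega)
    rw [h1]
    calc ∑ k ∈ Finset.range 5,
          ((S.filter (fun x => f x = c)).filter (fun x => (x / 7).toNat = k)).card
        ≤ ∑ _k ∈ Finset.range 5, 1 := by
          apply Finset.sum_le_sum
          intro k _
          apply Finset.card_le_one.mpr
          intro a ha b hb
          rw [Finset.mem_filter, Finset.mem_filter, hS, Finset.mem_Icc] at ha hb
          by_contra hab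
          have hfc : f a = f b := ha.1.2.trans hb.1.2.symm
          have h7 := hB a b hab hfc (by rw [ha.1.2]; exact hc)
          omega
      _ = 5 := by simp
  have zero : (S.filter (fun x => f x = 0)).card ≤ 14 := by
    have h1 := Finset.card_eq_sum_card_fiberwise
      (f := fun x : ℤ => (x / 5).toNat) (s := S.filter (fun x => f x = 0))
      (t := Finset.range 7)
      (by
        intro x hx
        rw [Finset.mem_coe, Finset.mem_filter, hS, Finset.mem_Icc] at hx
        show (x / 5).toNat ∈ Finset.range 7
        rw [Finset.mem_range]
        omega)
    rw [h1]
    calc ∑ k ∈ Finset.range 7,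
          ((S.filter (fun x => f x = 0)).filter (fun x => (x / 5).toNat = k)).card
        ≤ ∑ _k ∈ Finset.range 7, 2 := by
          apply Finset.sum_le_sum
          intro k _
          by_contra hgt
          push_neg at hgt
          obtain ⟨a, ha, b, hb, c', hc', hab, hac, hbc⟩ := Finset.two_lt_card.mp hgt
          rw [Finset.mem_filter, Finset.mem_filter, hS, Finset.mem_Icc] at ha hb hc'
          have hz : (f a : ℕ) = 0 := by rw [ha.1.2]; rfl
          have h7 := hA a b hab (ha.1.2.trans hb.1.2.symm) hz
          have h8 := hA a c' hac (ha.1.2.trans hc'.1.2.symm) hz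
          have h9 := hA b c' hbc (hb.1.2.trans hc'.1.2.symm) (by rw [hb.1.2]; rfl)
          omega
      _ = 14 := by simp
  rw [hcard, Fin.sum_univ_five] at hfib
  have b1 := heavy 1 (by decide)
  have b2 := heavy 2 (by decide)
  have b3 := heavy 3 (by decide)
  have b4 := heavy 4 (by decide)
  omega
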